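/- Let G be a finite connected simple graph with minimum degree at least 2 that contains two cycles with distinct edge sets (there exist closed walks c₁ and c₂ in G, each a cycle, whose edge sets differ). Let e = {x, y} be any edge of G and let G' = G.deleteEdges {e}. Then G' contains a cycle all of whose vertices are reachable from y in G'; that is, there is a vertex a reachable from y in G' and a closed walk c : G'.Walk a a with c.IsCycle. -/

import Mathlib

open SimpleGraph Walk

private lemma isPath_concat' {V : Type*} {G : SimpleGraph V} {u v w : V} {p : G.Walk u v}
    (hp : p.IsPath) (hw : w ∉ p.support) (h : G.Adj v w) : (p.concat h).IsPath := by
  rw [← SimpleGraph.Walk.isPath_reverse_iff, SimpleGraph.Walk.reverse_concat]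
  exact (SimpleGraph.Walk.cons_isPath_iff _ _).2 ⟨hp.reverse, by simpa using hw⟩

private lemma snd_eq_of_mem_edges' {V : Type*} {G : SimpleGraph V} {x y w : V} {p : G.Walk x w}
    (hp : p.IsPath) (he : s(x, y) ∈ p.edges) :
    ∃ (h : G.Adj x y) (q : G.Walk y w), p = SimpleGraph.Walk.cons h q := by
  cases p with
  | nil => simp at he
  | cons h' r =>
    rw [SimpleGraph.Walk.cons_isPath_iff] at hp
    rw [SimpleGraph.Walk.edges_cons, List.mem_cons] at he
    rcases he with he | he
    · rcases Sym2.eq_iff.1 he with ⟨-, rfl⟩ | ⟨h1, rfl⟩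
      · exact ⟨h', r, rfl⟩
      · exact absurd h1 h'.ne
    · exact absurd (SimpleGraph.Walk.fst_mem_support_of_mem_edges r he) hp.2

private lemma cycle_through_edge' {V : Type*} {G : SimpleGraph V} {x y : V}
    {c : G.Walk x x} (hc : c.IsCycle) (he : s(x, y) ∈ c.edges) :
    ∃ q : G.Walk y x, q.IsPath ∧ s(x, y) ∉ q.edges ∧
      ∀ f, f ∈ c.edges ↔ f = s(x, y) ∨ f ∈ q.edges := by
  cases c with
  | nil => exact absurd rfl hc.ne_nil
  | cons h q =>
    rename_i w
    rw [SimpleGraph.Walk.cons_isCycle_iff] at hc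
    obtain ⟨hq, hxw⟩ := hc
    by_cases hwy : w = y
    · subst hwy
      refine ⟨q, hq, hxw, fun f => ?_⟩
      simp [List.mem_cons, eq_comm]
    · have he' : s(x, y) ∈ q.edges := by
        rcases List.mem_cons.1 he with h1 | h1
        · exfalso
          rcases Sym2.eq_iff.1 h1 with ⟨-, h2⟩ | ⟨h2, h3⟩
          · exact hwy h2.symm
          · exact (h2 ▸ h).ne rfl
        · exact h1
      have herev : s(x, y) ∈ q.reverse.edges := by
        rw [SimpleGraph.Walk.edges_reverse, List.mem_reverse]; exact he'
      obtain ⟨h₂, t, ht⟩ := snd_eq_of_mem_edges' hq.reverse herev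
      have htp : t.IsPath ∧ x ∉ t.support := by
        have := hq.reverse
        rw [ht, SimpleGraph.Walk.cons_isPath_iff] at this
        exact this
      refine ⟨t.concat h.symm, isPath_concat' htp.1 htp.2 h.symm, ?_, fun f => ?_⟩
      · simp only [SimpleGraph.Walk.edges_concat, List.concat_eq_append, List.mem_append,
          List.mem_singleton]
        rintro (h1 | h1)
        · exact htp.2 (SimpleGraph.Walk.fst_mem_support_of_mem_edges t h1)
        · rcases Sym2.eq_iff.1 h1 with ⟨h2, -⟩ | ⟨-, h2⟩
          · exact h.ne h2
          · exact hwy h2.symm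
      · have hqe : ∀ g, g ∈ q.edges ↔ g = s(x, y) ∨ g ∈ t.edges := by
          intro g
          rw [← List.mem_reverse, ← SimpleGraph.Walk.edges_reverse, ht,
            SimpleGraph.Walk.edges_cons, List.mem_cons]
        rw [SimpleGraph.Walk.edges_cons, List.mem_cons, hqe f]
        simp only [SimpleGraph.Walk.edges_concat, List.concat_eq_append, List.mem_append,
          List.mem_singleton]
        constructor
        · rintro (rfl | rfl | h1)
          · right; right; rw [Sym2.eq_swap]
          · exact Or.inl rfl
          · exact Or.inr (Or.inl h1)
        · rintro (rfl | h1 | rfl)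
          · exact Or.inr (Or.inl rfl)
          · exact Or.inr (Or.inr h1)
          · left; rw [Sym2.eq_swap]

private lemma exists_max_path {V : Type*} [Fintype V] (G : SimpleGraph V) (y : V) :
    ∃ (v : V) (p : G.Walk y v), p.IsPath ∧
      ∀ (w : V) (q : G.Walk y w), q.IsPath → q.length ≤ p.length := by
  classical
  set P : ℕ → Prop := fun n => ∃ (v : V) (p : G.Walk y v), p.IsPath ∧ p.length = n with hP
  have hP0 : P 0 := ⟨y, SimpleGraph.Walk.nil, SimpleGraph.Walk.IsPath.nil, rfl⟩
  obtain ⟨v, p, hp, hlen⟩ :=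
    Nat.findGreatest_spec (P := P) (Nat.zero_le (Fintype.card V)) hP0
  refine ⟨v, p, hp, fun w q hq => ?_⟩
  rw [hlen]
  exact Nat.le_findGreatest (le_of_lt hq.length_lt) ⟨w, q, hq, rfl⟩

theorem cycle_reachable_after_deleteEdge {V : Type*} [Fintype V] (G : SimpleGraph V)
    [DecidableRel G.Adj] (hconn : G.Connected)
    (hdeg : ∀ v : V, 2 ≤ G.degree v)
    (htwo : ∃ (a b : V) (c₁ : G.Walk a a) (c₂ : G.Walk b b),
      c₁.IsCycle ∧ c₂.IsCycle ∧ {e | e ∈ c₁.edges} ≠ {e | e ∈ c₂.edges})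
    (x y : V) (hxy : G.Adj x y) :
    ∃ a : V, (G.deleteEdges {s(x, y)}).Reachable y a ∧
      ∃ c : (G.deleteEdges {s(x, y)}).Walk a a, c.IsCycle := by
  classical
  set G' := G.deleteEdges {s(x, y)} with hG'
  have hadj' : ∀ {a b : V}, G.Adj a b → s(a, b) ≠ s(x, y) → G'.Adj a b := by
    intro a b hab hne
    rw [hG', SimpleGraph.deleteEdges_adj]
    exact ⟨hab, by simpa using hne⟩
  have hadj'' : ∀ {v w : V}, v ≠ x → v ≠ y → G.Adj v w → G'.Adj v w := by
    intro v w hvx hvy hvw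
    refine hadj' hvw fun he => ?_
    rcases Sym2.eq_iff.1 he with ⟨h1, -⟩ | ⟨h1, -⟩
    · exact hvx h1
    · exact hvy h1
  by_cases hre : G'.Reachable x y
  · -- the deleted edge lies on a cycle; G' is connected
    have key : ∀ {u v : V}, G.Reachable u v → G'.Reachable u v := by
      intro u v huv
      obtain ⟨p⟩ := huv
      induction p with
      | nil => exact Reachable.refl _
      | @cons a b c h p ih =>
        refine Reachable.trans ?_ ih
        by_cases hes : s(a, b) = s(x, y)
        · rcases Sym2.eq_iff.1 hes with ⟨rfl, rfl⟩ | ⟨rfl, rfl⟩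
          · exact hre
          · exact hre.symm
        · exact (hadj' h hes).reachable
    by_contra hno
    push_neg at hno
    have hAcyclic : G'.IsAcyclic := by
      intro a c hc
      exact hno a (key (hconn.preconnected y a)) c hc
    obtain ⟨a, b, c₁, c₂, hc₁, hc₂, hne⟩ := htwo
    have hmem : ∀ {u : V} (c : G.Walk u u), c.IsCycle → s(x, y) ∈ c.edges := by
      intro u c hc
      by_contra hnm
      have hsub : ∀ f ∈ c.edges, f ∈ G'.edgeSet := by
        intro f hf
        rw [hG', SimpleGraph.edgeSet_deleteEdges]
        exact ⟨c.edges_subset_edgeSet hf, by rintro rfl; exact hnm hf⟩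
      exact hAcyclic _ (hc.transfer hsub)
    have he₁ := hmem c₁ hc₁
    have he₂ := hmem c₂ hc₂
    have hx₁ : x ∈ c₁.support := SimpleGraph.Walk.fst_mem_support_of_mem_edges c₁ he₁
    have hx₂ : x ∈ c₂.support := SimpleGraph.Walk.fst_mem_support_of_mem_edges c₂ he₂
    have hd₁ : (c₁.rotate x hx₁).IsCycle := hc₁.rotate hx₁
    have hd₂ : (c₂.rotate x hx₂).IsCycle := hc₂.rotate hx₂
    have hre₁ : ∀ f, f ∈ (c₁.rotate x hx₁).edges ↔ f ∈ c₁.edges :=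
      fun f => (SimpleGraph.Walk.rotate_edges c₁ x hx₁).mem_iff
    have hre₂ : ∀ f, f ∈ (c₂.rotate x hx₂).edges ↔ f ∈ c₂.edges :=
      fun f => (SimpleGraph.Walk.rotate_edges c₂ x hx₂).mem_iff
    obtain ⟨q₁, hq₁, hq₁e, hq₁iff⟩ := cycle_through_edge' hd₁ ((hre₁ _).2 he₁)
    obtain ⟨q₂, hq₂, hq₂e, hq₂iff⟩ := cycle_through_edge' hd₂ ((hre₂ _).2 he₂)
    have hsub₁ : ∀ f ∈ q₁.edges, f ∈ G'.edgeSet := by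
      intro f hf
      rw [hG', SimpleGraph.edgeSet_deleteEdges]
      exact ⟨q₁.edges_subset_edgeSet hf, by rintro rfl; exact hq₁e hf⟩
    have hsub₂ : ∀ f ∈ q₂.edges, f ∈ G'.edgeSet := by
      intro f hf
      rw [hG', SimpleGraph.edgeSet_deleteEdges]
      exact ⟨q₂.edges_subset_edgeSet hf, by rintro rfl; exact hq₂e hf⟩
    have hpeq : q₁.transfer G' hsub₁ = q₂.transfer G' hsub₂ := by
      have := hAcyclic.path_unique ⟨q₁.transfer G' hsub₁, hq₁.transfer hsub₁⟩
        ⟨q₂.transfer G' hsub₂, hq₂.transfer hsub₂⟩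
      exact congrArg Subtype.val this
    have hedges : q₁.edges = q₂.edges := by
      have := congrArg SimpleGraph.Walk.edges hpeq
      rwa [SimpleGraph.Walk.edges_transfer, SimpleGraph.Walk.edges_transfer] at this
    apply hne
    ext f
    simp only [Set.mem_setOf_eq]
    rw [← hre₁ f, ← hre₂ f, hq₁iff f, hq₂iff f, hedges]
  · -- the deleted edge is a bridge; find a cycle in the component of y
    obtain ⟨v, p, hp, hmax⟩ := exists_max_path G' y
    -- y has a neighbor in G'
    obtain ⟨z, hz, hzx⟩ := Finset.exists_mem_ne
      (s := G.neighborFinset y) (by have := hdeg y; rw [← G.card_neighborFinset_eq_degree] at this; omega) x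
    have hyz : G.Adj y z := (SimpleGraph.mem_neighborFinset G y z).1 hz
    have hyz' : G'.Adj y z := by
      refine hadj' hyz fun he => ?_
      rcases Sym2.eq_iff.1 he with ⟨h1, -⟩ | ⟨-, h1⟩
      · exact hxy.ne h1.symm
      · exact hzx h1
    have hp1 : 1 ≤ p.length := by
      have : (SimpleGraph.Walk.cons hyz' SimpleGraph.Walk.nil).IsPath := by
        rw [SimpleGraph.Walk.cons_isPath_iff]
        exact ⟨SimpleGraph.Walk.IsPath.nil, by simpa using hyz'.ne⟩
      simpa using hmax z _ this
    have hvy : v ≠ y := by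
      rintro rfl
      have hnil : p = SimpleGraph.Walk.nil := congrArg Subtype.val (SimpleGraph.Path.loop_eq ⟨p, hp⟩)
      rw [hnil] at hp1
      simp at hp1
    have hvx : v ≠ x := by
      rintro rfl
      exact hre (p.reverse.reachable)
    have hvadj : ∀ {w : V}, G.Adj v w → G'.Adj v w := fun h => hadj'' hvx hvy h
    have hsupp : ∀ w : V, G.Adj v w → w ∈ p.support := by
      intro w hw
      by_contra hws
      have hcp : (p.concat (hvadj hw)).IsPath := isPath_concat' hp hws (hvadj hw)
      have := hmax w _ hcp
      rw [SimpleGraph.Walk.length_concat] at this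
      omega
    obtain ⟨u, h₁, t, ht⟩ := SimpleGraph.Walk.exists_eq_cons_of_ne hvy p.reverse
    have htp : t.IsPath ∧ v ∉ t.support := by
      have := hp.reverse
      rw [ht, SimpleGraph.Walk.cons_isPath_iff] at this
      exact this
    obtain ⟨w, hw, hwu⟩ := Finset.exists_mem_ne
      (s := G.neighborFinset v) (by have := hdeg v; rw [← G.card_neighborFinset_eq_degree] at this; omega) u
    have hvw : G.Adj v w := (SimpleGraph.mem_neighborFinset G v w).1 hw
    have hvw' : G'.Adj v w := hvadj hvw
    have hwt : w ∈ t.support := by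
      have h1 : w ∈ p.support := hsupp w hvw
      have h2 : w ∈ p.reverse.support := by
        rw [SimpleGraph.Walk.support_reverse, List.mem_reverse]; exact h1
      rw [ht, SimpleGraph.Walk.support_cons, List.mem_cons] at h2
      rcases h2 with rfl | h2
      · exact absurd rfl hvw.ne
      · exact h2
    set t' := t.takeUntil w hwt with ht'
    have ht'p : t'.IsPath := htp.1.takeUntil hwt
    have hvt' : v ∉ t'.support := fun h => htp.2 (SimpleGraph.Walk.support_takeUntil_subset t hwt h)
    have hcyc : (SimpleGraph.Walk.cons h₁ (t'.concat hvw'.symm)).IsCycle := by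
      rw [SimpleGraph.Walk.cons_isCycle_iff]
      refine ⟨isPath_concat' ht'p hvt' hvw'.symm, ?_⟩
      simp only [SimpleGraph.Walk.edges_concat, List.concat_eq_append, List.mem_append,
        List.mem_singleton]
      rintro (h2 | h2)
      · exact hvt' (SimpleGraph.Walk.fst_mem_support_of_mem_edges t' h2)
      · rcases Sym2.eq_iff.1 h2 with ⟨h3, -⟩ | ⟨-, h3⟩
        · exact hvw.ne h3
        · exact hwu h3.symm
    exact ⟨v, p.reachable, _, hcyc⟩
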